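/- Let H : Ω → ℂᴺ be holomorphic on a ball Ω about 0 in ℂⁿ with power series H(z) = Σ_α C_α z^α. If ‖H(γz)‖² = ‖H(z)‖² for all diagonal unitary γ and all z, then ⟨C_α, C_β⟩ = 0 for all multi-indices α ≠ β. -/

import Mathlib

set_option maxHeartbeats 1000000

noncomputable section
open Metric Set

/-- An automorphism of the unit ball of `EuclideanSpace ℂ ι`: a holomorphic self-map of the
ball with a holomorphic inverse. -/
def IsBallAut {ι : Type} [Fintype ι] (ψ : EuclideanSpace ℂ ι → EuclideanSpace ℂ ι) : Prop :=
  DifferentiableOn ℂ ψ (ball (0 : EuclideanSpace ℂ ι) 1) ∧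
    MapsTo ψ (ball (0 : EuclideanSpace ℂ ι) 1) (ball (0 : EuclideanSpace ℂ ι) 1) ∧
    ∃ φ : EuclideanSpace ℂ ι → EuclideanSpace ℂ ι,
      DifferentiableOn ℂ φ (ball (0 : EuclideanSpace ℂ ι) 1) ∧
      MapsTo φ (ball (0 : EuclideanSpace ℂ ι) 1) (ball (0 : EuclideanSpace ℂ ι) 1) ∧
      (∀ z ∈ ball (0 : EuclideanSpace ℂ ι) 1, φ (ψ z) = z) ∧
      (∀ z ∈ ball (0 : EuclideanSpace ℂ ι) 1, ψ (φ z) = z)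

namespace Stmt13Aux
open Complex MeasureTheory

/-- A copy of `ℝ` equipped with the measure `volume.restrict (Ioc 0 (2π))`. -/
def TT : Type := ℝ

instance : MeasurableSpace TT := inferInstanceAs (MeasurableSpace ℝ)
instance : TopologicalSpace TT := inferInstanceAs (TopologicalSpace ℝ)
instance : BorelSpace TT := inferInstanceAs (BorelSpace ℝ)
instance : SecondCountableTopology TT := inferInstanceAs (SecondCountableTopology ℝ)
instance : MeasureSpace TT :=
  ⟨(volume : Measure ℝ).restrict (Set.Ioc 0 (2 * Real.pi))⟩

/-- The coercion of `TT` back to `ℝ`. -/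
def tval : TT → ℝ := fun t => t

lemma continuous_tval : Continuous tval := continuous_id

instance : IsFiniteMeasure (volume : Measure TT) := by
  constructor
  show (volume : Measure ℝ).restrict (Set.Ioc 0 (2 * Real.pi)) Set.univ < ⊤
  rw [Measure.restrict_apply_univ]
  simp [Real.volume_Ioc]
  exact ENNReal.mul_lt_top (by simp) ENNReal.ofReal_lt_top

instance : SigmaFinite (volume : Measure TT) := inferInstance

lemma vol_TT : (volume : Measure TT) = (volume : Measure ℝ).restrict (Set.Ioc 0 (2 * Real.pi)) := rfl

lemma norm_exp_I_int_mul (k : ℤ) (t : ℝ) : ‖Complex.exp (Complex.I * (k : ℂ) * (t : ℂ))‖ = 1 := by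
  have : Complex.I * (k : ℂ) * (t : ℂ) = ((k * t : ℝ) : ℂ) * Complex.I := by
    push_cast; ring
  rw [this, Complex.norm_exp_ofReal_mul_I]

lemma integral_TT_exp (k : ℤ) :
    (∫ t : TT, Complex.exp (Complex.I * (k : ℂ) * (tval t : ℂ)))
      = if k = 0 then ((2 * Real.pi : ℝ) : ℂ) else 0 := by
  have h0 : (0:ℝ) ≤ 2 * Real.pi := by positivity
  have h1 : (∫ t : TT, Complex.exp (Complex.I * (k : ℂ) * (tval t : ℂ)))
      = ∫ x in (0:ℝ)..(2 * Real.pi), Complex.exp (Complex.I * (k : ℂ) * (x : ℂ)) := by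
    rw [intervalIntegral.integral_of_le h0]
    rfl
  rw [h1]
  by_cases hk : k = 0
  · subst hk
    simp
  · rw [if_neg hk]
    have hc : (Complex.I * (k : ℂ)) ≠ 0 := by
      simp [Complex.I_ne_zero, hk]
    have := integral_exp_mul_complex (a := (0:ℝ)) (b := 2 * Real.pi) hc
    simp only [mul_assoc] at this ⊢
    rw [this]
    have h2 : Complex.I * ((k:ℂ) * ((2 * Real.pi : ℝ) : ℂ)) = (k : ℂ) * (2 * Real.pi * Complex.I) := by
      push_cast; ring
    rw [h2, Complex.exp_int_mul_two_pi_mul_I]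
    simp


lemma onevar (b : ℕ → ℂ) (ρ : ℝ) (hρ : 0 < ρ)
    (hsum : Summable fun k => ‖b k‖ * ρ ^ k)
    (hzero : ∀ s : ℝ, 0 < s → s < ρ → ∑' k, b k * (s : ℂ) ^ k = 0) :
    ∀ k, b k = 0 := by
  intro k
  induction k using Nat.strong_induction_on with
  | _ m ih =>
  set ρ' : ℝ := ρ / 2 with hρ'def
  have hρ' : 0 < ρ' := by positivity
  have hρ'lt : ρ' < ρ := by rw [hρ'def]; linarith
  have hshift : Summable fun i => ‖b (i + (m + 1))‖ * ρ' ^ i := by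
    have h1 : Summable fun i => ‖b (i + (m+1))‖ * ρ ^ (i + (m+1)) :=
      (summable_nat_add_iff (f := fun k => ‖b k‖ * ρ ^ k) (m+1)).2 hsum
    have h2 : Summable fun i => (‖b (i + (m+1))‖ * ρ ^ (i + (m+1))) * (ρ^(m+1))⁻¹ :=
      h1.mul_right _
    apply h2.of_nonneg_of_le (fun i => by positivity)
    intro i
    have heq : ‖b (i+(m+1))‖ * ρ ^ (i+(m+1)) * (ρ^(m+1))⁻¹ = ‖b (i+(m+1))‖ * ρ ^ i := by
      rw [pow_add]
      field_simp
    rw [heq]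
    gcongr
  set M : ℝ := ∑' i, ‖b (i + (m + 1))‖ * ρ' ^ i with hM
  have hM0 : 0 ≤ M := tsum_nonneg (fun i => by positivity)
  have key : ∀ s : ℝ, 0 < s → s ≤ ρ' → ‖b m‖ ≤ s * M := by
    intro s hs hsρ'
    have hsρ : s < ρ :=  lt_of_le_of_lt hsρ' hρ'lt
    have hsums : Summable fun j => b j * (s : ℂ) ^ j := by
      apply Summable.of_norm
      apply hsum.of_nonneg_of_le (fun j => by positivity)
      intro j
      rw [norm_mul, norm_pow, Complex.norm_real, Real.norm_eq_abs, abs_of_pos hs]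
      gcongr
    have h0 : ∑' j, b j * (s : ℂ) ^ j = 0 := hzero s hs hsρ
    have h1 := Summable.sum_add_tsum_nat_add m hsums
    have h2 : ∑ i ∈ Finset.range m, b i * (s:ℂ)^i = 0 := by
      apply Finset.sum_eq_zero
      intro i hi
      rw [ih i (Finset.mem_range.1 hi), zero_mul]
    rw [h2, h0, zero_add] at h1
    -- h1 : ∑' i, b (i + m) * s ^ (i + m) = 0
    have hsumshift : Summable fun i => b (i + m) * (s:ℂ)^(i+m) :=
      (summable_nat_add_iff (f := fun j => b j * (s:ℂ)^j) m).2 hsums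
    have h3 := Summable.sum_add_tsum_nat_add 1 hsumshift
    rw [h1] at h3
    have h4 : b m * (s:ℂ)^m = - ∑' i, b (i + 1 + m) * (s:ℂ)^(i + 1 + m) := by
      have : ∑ i ∈ Finset.range 1, b (i + m) * (s:ℂ)^(i+m) = b m * (s:ℂ)^m := by simp
      rw [this] at h3
      linear_combination h3
    have hnorm : ‖b m‖ * s ^ m ≤ (s * M) * s ^ m := by
      have hL : ‖b m * (s:ℂ)^m‖ = ‖b m‖ * s ^ m := by
        rw [norm_mul, norm_pow, Complex.norm_real, Real.norm_eq_abs, abs_of_pos hs]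
      have hsum5 : Summable fun i => ‖b (i + 1 + m) * (s:ℂ)^(i+1+m)‖ := by
        apply Summable.of_nonneg_of_le (fun i => norm_nonneg _) _
          (hshift.mul_right (s^(m+1)))
        intro i
        rw [norm_mul, norm_pow, Complex.norm_real, Real.norm_eq_abs, abs_of_pos hs]
        have : s ^ (i + 1 + m) = s ^ i * s ^ (m+1) := by ring
        rw [this, ← mul_assoc]
        gcongr
        exact le_of_eq (by rw [Nat.add_assoc, Nat.add_comm 1 m])
      calc ‖b m‖ * s ^ m = ‖b m * (s:ℂ)^m‖ := hL.symm
        _ = ‖∑' i, b (i + 1 + m) * (s:ℂ)^(i + 1 + m)‖ := by rw [h4, norm_neg]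
        _ ≤ ∑' i, ‖b (i + 1 + m) * (s:ℂ)^(i + 1 + m)‖ := norm_tsum_le_tsum_norm hsum5
        _ ≤ ∑' i, (‖b (i + (m+1))‖ * ρ' ^ i) * s ^ (m+1) := by
            apply Summable.tsum_le_tsum _ hsum5 (hshift.mul_right _)
            intro i
            rw [norm_mul, norm_pow, Complex.norm_real, Real.norm_eq_abs, abs_of_pos hs]
            have : s ^ (i + 1 + m) = s ^ i * s ^ (m+1) := by ring
            rw [this, ← mul_assoc]
            gcongr
            exact le_of_eq (by rw [Nat.add_assoc, Nat.add_comm 1 m])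
        _ = M * s ^ (m+1) := by rw [tsum_mul_right]
        _ = (s * M) * s ^ m := by ring
    exact le_of_mul_le_mul_right hnorm (by positivity)
  by_contra hbm
  have hε : 0 < ‖b m‖ := norm_pos_iff.2 hbm
  set s : ℝ := min ρ' (‖b m‖ / (2 * (M + 1))) with hsdef
  have hs0 : 0 < s := lt_min hρ' (by positivity)
  have hsle : s ≤ ρ' := min_le_left _ _
  have h5 := key s hs0 hsle
  have h6 : s ≤ ‖b m‖ / (2 * (M + 1)) := min_le_right _ _
  have : ‖b m‖ ≤ (‖b m‖ / (2 * (M + 1))) * M := by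
    calc ‖b m‖ ≤ s * M := h5
      _ ≤ (‖b m‖ / (2 * (M + 1))) * M := by gcongr
  have hMpos : 0 < M + 1 := by linarith
  rw [div_mul_eq_mul_div, le_div_iff₀ (by positivity)] at this
  nlinarith [hε, hM0]


lemma multivar : ∀ (n : ℕ) (ι : Type) (_ : Countable ι) (e : ι → Fin n → ℕ)
    (_ : Function.Injective e) (a : ι → ℂ) (ρ : ℝ) (_ : 0 < ρ)
    (_ : Summable fun i => ‖a i‖ * ∏ j, ρ ^ e i j)
    (_ : ∀ s : Fin n → ℝ, (∀ j, s j ∈ Set.Ioo 0 ρ) →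
      ∑' i, a i * ∏ j, ((s j : ℝ) : ℂ) ^ e i j = 0) (i : ι), a i = 0 := by
  intro n
  induction n with
  | zero =>
    intro ι hcount e he a ρ hρ hsum hzero i
    have h0 : ∑' i', a i' * ∏ j, ((Fin.elim0 j : ℝ) : ℂ) ^ e i' j = 0 :=
      hzero Fin.elim0 (fun j => j.elim0)
    have hsub : ∀ (x y : ι), x = y := by
      intro x y
      exact he (Subsingleton.elim _ _)
    rw [tsum_eq_single i (fun b hb => absurd (hsub b i) hb)] at h0
    simpa using h0
  | succ n IH =>
    intro ι hcount e he a ρ hρ hsum hzero i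
    classical
    -- fibers over the first exponent
    set P : ℕ → Type := fun k => {i : ι // e i 0 = k} with hP
    have he' : ∀ k, Function.Injective (fun (x : P k) (j : Fin n) => e x.1 j.succ) := by
      intro k x y h
      apply Subtype.ext
      apply he
      funext j
      refine Fin.cases ?_ ?_ j
      · rw [x.2, y.2]
      · intro j'
        exact congrFun h j'
    have hcount' : Countable ι := hcount
    set σ : (Σ k, P k) ≃ ι := Equiv.sigmaFiberEquiv (fun i => e i 0) with hσ
    have hσ_app : ∀ (k : ℕ) (x : P k), σ ⟨k, x⟩ = x.1 := fun k x => rfl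
    set g : ι → ℝ := fun i => ‖a i‖ * ∏ j, ρ ^ e i j with hg
    have hgS : Summable (g ∘ σ) := σ.summable_iff.mpr hsum
    have hg_eq : ∀ (k : ℕ) (x : P k),
        g x.1 = ρ ^ k * (‖a x.1‖ * ∏ j : Fin n, ρ ^ e x.1 j.succ) := by
      intro k x
      show ‖a x.1‖ * ∏ j, ρ ^ e x.1 j = _
      rw [Fin.prod_univ_succ, x.2]
      ring
    have hfib : ∀ k, Summable fun x : P k => ‖a x.1‖ * ∏ j : Fin n, ρ ^ e x.1 j.succ := by
      intro k
      have h1 : Summable fun x : P k => g (σ ⟨k, x⟩) := hgS.sigma_factor k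
      have h2 : Summable fun x : P k =>
          ρ ^ k * (‖a x.1‖ * ∏ j : Fin n, ρ ^ e x.1 j.succ) := by
        apply h1.congr
        intro x
        rw [hσ_app, hg_eq]
      have h3 := h2.mul_left (ρ ^ k)⁻¹
      apply h3.congr
      intro x
      rw [← mul_assoc, inv_mul_cancel₀ (pow_ne_zero _ (ne_of_gt hρ)), one_mul]
    set B : ℕ → ℝ := fun k => ∑' x : P k, ‖a x.1‖ * ∏ j : Fin n, ρ ^ e x.1 j.succ with hB
    have hBnn : ∀ k, 0 ≤ B k := fun k => tsum_nonneg (fun x => by positivity)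
    have hBsum : Summable fun k => B k * ρ ^ k := by
      have h1 := (summable_sigma_of_nonneg (f := g ∘ σ) (fun p => by
        apply mul_nonneg (norm_nonneg _); positivity)).mp hgS
      apply h1.2.congr
      intro k
      have : ∀ x : P k, (g ∘ σ) ⟨k, x⟩ = ρ ^ k * (‖a x.1‖ * ∏ j : Fin n, ρ ^ e x.1 j.succ) := by
        intro x
        show g (σ ⟨k, x⟩) = _
        rw [hσ_app, hg_eq]
      rw [tsum_congr this, tsum_mul_left]
      ring
    have hbound : ∀ (s' : Fin n → ℝ), (∀ j, s' j ∈ Set.Ioo 0 ρ) → ∀ (x : ι),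
        ‖a x * ∏ j : Fin n, ((s' j : ℝ) : ℂ) ^ e x j.succ‖
          ≤ ‖a x‖ * ∏ j : Fin n, ρ ^ e x j.succ := by
      intro s' hs' x
      have h1 : ∏ j : Fin n, ‖((s' j : ℝ) : ℂ) ^ e x j.succ‖ ≤ ∏ j : Fin n, ρ ^ e x j.succ := by
        apply Finset.prod_le_prod (fun j _ => norm_nonneg _)
        intro j _
        rw [norm_pow, Complex.norm_real, Real.norm_eq_abs, abs_of_pos (hs' j).1]
        exact pow_le_pow_left₀ (hs' j).1.le (hs' j).2.le _
      rw [norm_mul, norm_prod]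
      exact mul_le_mul_of_nonneg_left h1 (norm_nonneg _)
    have key : ∀ (s' : Fin n → ℝ), (∀ j, s' j ∈ Set.Ioo 0 ρ) → ∀ k,
        ∑' x : P k, a x.1 * ∏ j : Fin n, ((s' j : ℝ) : ℂ) ^ e x.1 j.succ = 0 := by
      intro s' hs'
      set b : ℕ → ℂ :=
        fun k => ∑' x : P k, a x.1 * ∏ j : Fin n, ((s' j : ℝ) : ℂ) ^ e x.1 j.succ with hb
      have hfib' : ∀ k, Summable fun x : P k =>
          ‖a x.1 * ∏ j : Fin n, ((s' j : ℝ) : ℂ) ^ e x.1 j.succ‖ :=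
        fun k => Summable.of_nonneg_of_le (fun x => norm_nonneg _)
          (fun x => hbound s' hs' x.1) (hfib k)
      apply onevar b ρ hρ
      · apply Summable.of_nonneg_of_le (fun k => by positivity) _ hBsum
        intro k
        have h1 : ‖b k‖ ≤ B k := by
          calc ‖b k‖ ≤ ∑' x : P k, ‖a x.1 * ∏ j : Fin n, ((s' j : ℝ) : ℂ) ^ e x.1 j.succ‖ :=
                norm_tsum_le_tsum_norm (hfib' k)
            _ ≤ B k := Summable.tsum_le_tsum (fun x => hbound s' hs' x.1) (hfib' k) (hfib k)
        gcongr
      · intro s0 hs0 hs0ρ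
        set s : Fin (n+1) → ℝ := Fin.cons s0 s' with hs
        have hbox : ∀ j, s j ∈ Set.Ioo 0 ρ := by
          intro j
          refine Fin.cases ?_ ?_ j
          · simpa [hs] using Set.mem_Ioo.mpr ⟨hs0, hs0ρ⟩
          · intro j'
            simpa [hs] using hs' j'
        have h0 := hzero s hbox
        set F : ι → ℂ := fun i' => a i' * ∏ j, ((s j : ℝ) : ℂ) ^ e i' j with hF
        have hFs : Summable F := by
          apply Summable.of_norm
          apply hsum.of_nonneg_of_le (fun i' => by positivity)
          intro i'
          rw [hF]
          have h1 : ∏ j, ‖((s j : ℝ) : ℂ) ^ e i' j‖ ≤ ∏ j, ρ ^ e i' j := by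
            apply Finset.prod_le_prod (fun j _ => norm_nonneg _)
            intro j _
            rw [norm_pow, Complex.norm_real, Real.norm_eq_abs, abs_of_pos (hbox j).1]
            exact pow_le_pow_left₀ (hbox j).1.le (hbox j).2.le _
          rw [norm_mul, norm_prod]
          exact mul_le_mul_of_nonneg_left h1 (norm_nonneg _)
        have hFS : Summable (F ∘ σ) := σ.summable_iff.mpr hFs
        have h1 : ∑' p : (Σ k, P k), F (σ p) = ∑' i', F i' := σ.tsum_eq F
        have h2 : ∑' p : (Σ k, P k), F (σ p) = ∑' k, ∑' x : P k, F (σ ⟨k, x⟩) :=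
          Summable.tsum_sigma' (fun k => hFS.sigma_factor k) hFS
        have h3 : ∀ (k : ℕ) (x : P k), F (σ ⟨k, x⟩)
            = ((s0 : ℝ) : ℂ) ^ k * (a x.1 * ∏ j : Fin n, ((s' j : ℝ) : ℂ) ^ e x.1 j.succ) := by
          intro k x
          rw [hσ_app, hF]
          show a x.1 * ∏ j, ((s j : ℝ) : ℂ) ^ e x.1 j = _
          rw [Fin.prod_univ_succ, x.2]
          have hz : s 0 = s0 := by rw [hs]; simp
          have hsucc : ∀ j : Fin n, s j.succ = s' j := by intro j; rw [hs]; simp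
          simp only [hz, hsucc]
          ring
        have h4 : ∀ k : ℕ, ∑' x : P k, F (σ ⟨k, x⟩) = b k * ((s0 : ℝ) : ℂ) ^ k := by
          intro k
          rw [tsum_congr (h3 k), tsum_mul_left]
          ring
        calc ∑' k, b k * ((s0 : ℝ) : ℂ) ^ k = ∑' k, ∑' x : P k, F (σ ⟨k, x⟩) := by
              exact tsum_congr (fun k => (h4 k).symm)
          _ = ∑' p : (Σ k, P k), F (σ p) := h2.symm
          _ = ∑' i', F i' := h1
          _ = 0 := h0
    have hfin := IH (P (e i 0)) inferInstance (fun x j => e x.1 j.succ) (he' _)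
      (fun x => a x.1) ρ hρ (hfib _) (fun s' hs' => key s' hs' (e i 0)) ⟨i, rfl⟩
    exact hfin


-- double expansion of the inner product
lemma hdouble_lemma {n N : ℕ} (r : ℝ)
    (H : EuclideanSpace ℂ (Fin n) → EuclideanSpace ℂ (Fin N))
    (C : (Fin n → ℕ) → EuclideanSpace ℂ (Fin N))
    (habs : ∀ z ∈ ball (0 : EuclideanSpace ℂ (Fin n)) r,
      Summable (fun α : Fin n → ℕ => ‖C α‖ * ∏ j, ‖z j‖ ^ α j))
    (hser : ∀ z ∈ ball (0 : EuclideanSpace ℂ (Fin n)) r,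
      HasSum (fun α : Fin n → ℕ => (∏ j, z j ^ α j) • C α) (H z))
    (v : EuclideanSpace ℂ (Fin n)) (hv : v ∈ ball (0 : EuclideanSpace ℂ (Fin n)) r) :
    HasSum (fun p : (Fin n → ℕ) × (Fin n → ℕ) =>
      (starRingEnd ℂ) (∏ j, v j ^ p.1 j) * (∏ j, v j ^ p.2 j) * (inner ℂ (C p.1) (C p.2) : ℂ))
      (inner ℂ (H v) (H v) : ℂ) := by
  have hser' := hser v hv
  have habs' := habs v hv
  set F : (Fin n → ℕ) × (Fin n → ℕ) → ℂ := fun p =>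
    (starRingEnd ℂ) (∏ j, v j ^ p.1 j) * (∏ j, v j ^ p.2 j) * (inner ℂ (C p.1) (C p.2) : ℂ)
    with hF
  have hprod2 : Summable (fun p : (Fin n → ℕ) × (Fin n → ℕ) =>
      (‖C p.1‖ * ∏ j, ‖v j‖ ^ p.1 j) * (‖C p.2‖ * ∏ j, ‖v j‖ ^ p.2 j)) := by
    have := Summable.mul_of_nonneg (f := fun a : Fin n → ℕ => ‖C a‖ * ∏ j, ‖v j‖ ^ a j)
      (g := fun a : Fin n → ℕ => ‖C a‖ * ∏ j, ‖v j‖ ^ a j) habs' habs'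
      (fun a => by positivity) (fun a => by positivity)
    exact this
  have hnorm1 : ∀ m : Fin n → ℕ, ‖(∏ j, v j ^ m j : ℂ)‖ = ∏ j, ‖v j‖ ^ m j := by
    intro m
    rw [norm_prod]
    exact Finset.prod_congr rfl (fun j _ => norm_pow _ _)
  have hFs : Summable F := by
    apply Summable.of_norm
    apply hprod2.of_nonneg_of_le (fun p => norm_nonneg _)
    intro p
    calc ‖F p‖ = (∏ j, ‖v j‖ ^ p.1 j) * (∏ j, ‖v j‖ ^ p.2 j) * ‖(inner ℂ (C p.1) (C p.2) : ℂ)‖ := by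
          rw [hF, norm_mul, norm_mul, RCLike.norm_conj, hnorm1, hnorm1]
      _ ≤ (∏ j, ‖v j‖ ^ p.1 j) * (∏ j, ‖v j‖ ^ p.2 j) * (‖C p.1‖ * ‖C p.2‖) := by
          gcongr
          exact norm_inner_le_norm _ _
      _ = (‖C p.1‖ * ∏ j, ‖v j‖ ^ p.1 j) * (‖C p.2‖ * ∏ j, ‖v j‖ ^ p.2 j) := by ring
  have hinner1 : ∀ a : Fin n → ℕ, HasSum
      (fun b : Fin n → ℕ => (∏ j, v j ^ b j) * (inner ℂ (C a) (C b) : ℂ))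
      (inner ℂ (C a) (H v) : ℂ) := by
    intro a
    have h1 := (innerSL ℂ (C a)).hasSum hser'
    simp only [innerSL_apply_apply, inner_smul_right] at h1
    exact h1
  have hinner2 : HasSum
      (fun a : Fin n → ℕ => (starRingEnd ℂ) (∏ j, v j ^ a j) * (inner ℂ (C a) (H v) : ℂ))
      (inner ℂ (H v) (H v) : ℂ) := by
    have h1 := (innerSL ℂ (H v)).hasSum hser'
    simp only [innerSL_apply_apply, inner_smul_right] at h1
    have h2 := h1.star
    simp only [star_mul', RCLike.star_def, inner_conj_symm] at h2
    exact h2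
  have htsum : ∑' p, F p = (inner ℂ (H v) (H v) : ℂ) := by
    rw [Summable.tsum_prod' hFs (fun a =>
      ((hinner1 a).mul_left ((starRingEnd ℂ) (∏ j, v j ^ a j))).summable.congr
        (fun b => by rw [hF]; ring))]
    have hb : ∀ a, ∑' b, F (a, b)
        = (starRingEnd ℂ) (∏ j, v j ^ a j) * (inner ℂ (C a) (H v) : ℂ) := by
      intro a
      rw [tsum_congr (fun b => show F (a, b)
        = (starRingEnd ℂ) (∏ j, v j ^ a j) * ((∏ j, v j ^ b j) * (inner ℂ (C a) (C b) : ℂ))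
        from by rw [hF]; ring)]
      exact ((hinner1 a).mul_left _).tsum_eq
    rw [tsum_congr hb]
    exact hinner2.tsum_eq
  rw [← htsum]
  exact hFs.hasSum


instance {n : ℕ} : IsFiniteMeasure (volume : Measure (Fin n → TT)) := by
  constructor
  rw [show (volume : Measure (Fin n → TT)) = Measure.pi (fun _ => volume) from rfl]
  rw [MeasureTheory.Measure.pi_univ]
  exact ENNReal.prod_lt_top (fun i _ => measure_lt_top _ _)

lemma step1 {n N : ℕ} (r ρ : ℝ) (hρ : 0 < ρ)
    (H : EuclideanSpace ℂ (Fin n) → EuclideanSpace ℂ (Fin N))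
    (C : (Fin n → ℕ) → EuclideanSpace ℂ (Fin N))
    (habs : ∀ z ∈ ball (0 : EuclideanSpace ℂ (Fin n)) r,
      Summable (fun α : Fin n → ℕ => ‖C α‖ * ∏ j, ‖z j‖ ^ α j))
    (hser : ∀ z ∈ ball (0 : EuclideanSpace ℂ (Fin n)) r,
      HasSum (fun α : Fin n → ℕ => (∏ j, z j ^ α j) • C α) (H z))
    (hinv : ∀ θ : Fin n → ℝ, ∀ z ∈ ball (0 : EuclideanSpace ℂ (Fin n)) r,
      ‖H (WithLp.toLp 2 (fun j => Complex.exp (Complex.I * θ j) * z j : Fin n → ℂ))‖ ^ 2 = ‖H z‖ ^ 2)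
    (hball : ∀ v : EuclideanSpace ℂ (Fin n), (∀ j, ‖v j‖ ≤ ρ) →
      v ∈ ball (0 : EuclideanSpace ℂ (Fin n)) r)
    (α β : Fin n → ℕ) (j0 : Fin n) (hj0 : α j0 ≠ β j0)
    (s : Fin n → ℝ) (hs : ∀ j, s j ∈ Set.Ioo 0 ρ) :
    ∑' q : {p : (Fin n → ℕ) × (Fin n → ℕ) // ∀ j, p.1 j + β j = p.2 j + α j},
      (inner ℂ (C q.1.1) (C q.1.2) : ℂ) * ∏ j, ((s j : ℝ) : ℂ) ^ (q.1.1 j + q.1.2 j) = 0 := by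
  classical
  set z : EuclideanSpace ℂ (Fin n) := WithLp.toLp 2 (fun j => ((s j : ℝ) : ℂ)) with hz
  have hznorm : ∀ j, ‖z j‖ = s j := by
    intro j
    rw [hz]
    show ‖((s j : ℝ) : ℂ)‖ = s j
    rw [Complex.norm_real, Real.norm_eq_abs, abs_of_pos (hs j).1]
  have hzmem : z ∈ ball (0 : EuclideanSpace ℂ (Fin n)) r :=
    hball z (fun j => by rw [hznorm]; exact (hs j).2.le)
  set w : (Fin n → TT) → EuclideanSpace ℂ (Fin n) :=
    fun θ => WithLp.toLp 2 (fun j => Complex.exp (Complex.I * ((tval (θ j) : ℝ) : ℂ)) * z j) with hw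
  have hwmem : ∀ θ, w θ ∈ ball (0 : EuclideanSpace ℂ (Fin n)) r := by
    intro θ
    apply hball
    intro j
    show ‖Complex.exp (Complex.I * ((tval (θ j) : ℝ) : ℂ)) * z j‖ ≤ ρ
    rw [norm_mul, mul_comm Complex.I, Complex.norm_exp_ofReal_mul_I, one_mul, hznorm]
    exact (hs j).2.le
  set kk : (Fin n → ℕ) × (Fin n → ℕ) → Fin n → ℤ :=
    fun p j => (p.2 j : ℤ) + (α j : ℤ) - (p.1 j : ℤ) - (β j : ℤ) with hkk
  set cf : (Fin n → ℕ) × (Fin n → ℕ) → ℂ :=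
    fun p => (∏ j, ((s j : ℝ) : ℂ) ^ (p.1 j + p.2 j)) * (inner ℂ (C p.1) (C p.2) : ℂ) with hcf
  set f : (Fin n → ℕ) × (Fin n → ℕ) → (Fin n → TT) → ℂ :=
    fun p θ => cf p * ∏ j, Complex.exp (Complex.I * ((kk p j : ℤ) : ℂ) * ((tval (θ j) : ℝ) : ℂ))
    with hf
  -- pointwise expansion
  have hpt : ∀ θ : Fin n → TT, HasSum (fun p => f p θ)
      ((∏ j, Complex.exp (Complex.I * (((α j : ℤ) - (β j : ℤ) : ℤ) : ℂ)
        * ((tval (θ j) : ℝ) : ℂ))) * (inner ℂ (H (w θ)) (H (w θ)) : ℂ)) := by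
    intro θ
    have h1 := (hdouble_lemma r H C habs hser (w θ) (hwmem θ)).mul_left
      (∏ j, Complex.exp (Complex.I * (((α j : ℤ) - (β j : ℤ) : ℤ) : ℂ) * ((tval (θ j) : ℝ) : ℂ)))
    have hpow : ∀ m : Fin n → ℕ, (∏ j, (w θ) j ^ m j)
        = Complex.exp (∑ j, (m j : ℂ) * (Complex.I * ((tval (θ j) : ℝ) : ℂ)))
          * ∏ j, ((s j : ℝ) : ℂ) ^ m j := by
      intro m
      rw [Complex.exp_sum, ← Finset.prod_mul_distrib]
      apply Finset.prod_congr rfl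
      intro j _
      show (Complex.exp (Complex.I * ((tval (θ j) : ℝ) : ℂ)) * z j) ^ m j = _
      rw [mul_pow, ← Complex.exp_nat_mul]
    have hpowc : ∀ m : Fin n → ℕ, (starRingEnd ℂ) (∏ j, (w θ) j ^ m j)
        = Complex.exp (-∑ j, (m j : ℂ) * (Complex.I * ((tval (θ j) : ℝ) : ℂ)))
          * ∏ j, ((s j : ℝ) : ℂ) ^ m j := by
      intro m
      rw [hpow, map_mul, ← Complex.exp_conj]
      congr 1
      · congr 1
        rw [map_sum, ← Finset.sum_neg_distrib]
        apply Finset.sum_congr rfl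
        intro j _
        simp [Complex.conj_I, Complex.conj_ofReal]
      · rw [map_prod]
        apply Finset.prod_congr rfl
        intro j _
        rw [map_pow, Complex.conj_ofReal]
    have heq : ∀ p : (Fin n → ℕ) × (Fin n → ℕ),
        (∏ j, Complex.exp (Complex.I * (((α j : ℤ) - (β j : ℤ) : ℤ) : ℂ)
          * ((tval (θ j) : ℝ) : ℂ)))
        * ((starRingEnd ℂ) (∏ j, (w θ) j ^ p.1 j) * (∏ j, (w θ) j ^ p.2 j)
          * (inner ℂ (C p.1) (C p.2) : ℂ)) = f p θ := by
      intro p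
      rw [hpowc p.1, hpow p.2]
      simp only [hf, hcf]
      rw [show (∏ j, Complex.exp (Complex.I * ((kk p j : ℤ) : ℂ) * ((tval (θ j) : ℝ) : ℂ)))
        = Complex.exp (∑ j, Complex.I * ((kk p j : ℤ) : ℂ) * ((tval (θ j) : ℝ) : ℂ))
        from (Complex.exp_sum _ _).symm]
      rw [show (∏ j, Complex.exp (Complex.I * (((α j : ℤ) - (β j : ℤ) : ℤ) : ℂ)
          * ((tval (θ j) : ℝ) : ℂ)))
        = Complex.exp (∑ j, Complex.I * (((α j : ℤ) - (β j : ℤ) : ℤ) : ℂ)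
          * ((tval (θ j) : ℝ) : ℂ)) from (Complex.exp_sum _ _).symm]
      rw [show (∏ j, ((s j : ℝ) : ℂ) ^ (p.1 j + p.2 j))
        = (∏ j, ((s j : ℝ) : ℂ) ^ p.1 j) * (∏ j, ((s j : ℝ) : ℂ) ^ p.2 j) by
          rw [← Finset.prod_mul_distrib]
          exact Finset.prod_congr rfl (fun j _ => pow_add _ _ _)]
      rw [show ∀ (A B C' : ℂ) (Z1 Z2 I' : ℂ),
        Complex.exp A * (Complex.exp B * Z1 * (Complex.exp C' * Z2) * I')
        = Complex.exp (A + B + C') * (Z1 * Z2 * I') from fun A B C' Z1 Z2 I' => by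
          rw [Complex.exp_add, Complex.exp_add]; ring]
      rw [show (∑ j, Complex.I * (((α j : ℤ) - (β j : ℤ) : ℤ) : ℂ) * ((tval (θ j) : ℝ) : ℂ))
          + (-∑ j, ((p.1 j : ℕ) : ℂ) * (Complex.I * ((tval (θ j) : ℝ) : ℂ)))
          + (∑ j, ((p.2 j : ℕ) : ℂ) * (Complex.I * ((tval (θ j) : ℝ) : ℂ)))
        = ∑ j, Complex.I * ((kk p j : ℤ) : ℂ) * ((tval (θ j) : ℝ) : ℂ) by
          rw [← Finset.sum_neg_distrib, ← Finset.sum_add_distrib, ← Finset.sum_add_distrib]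
          apply Finset.sum_congr rfl
          intro j _
          rw [hkk]
          push_cast
          ring]
      ring
    rw [show (fun p => f p θ) = fun p : (Fin n → ℕ) × (Fin n → ℕ) =>
      (∏ j, Complex.exp (Complex.I * (((α j : ℤ) - (β j : ℤ) : ℤ) : ℂ)
          * ((tval (θ j) : ℝ) : ℂ)))
      * ((starRingEnd ℂ) (∏ j, (w θ) j ^ p.1 j) * (∏ j, (w θ) j ^ p.2 j)
          * (inner ℂ (C p.1) (C p.2) : ℂ)) from funext (fun p => (heq p).symm)]
    exact h1
  -- constancy of the inner product
  have hconst : ∀ θ : Fin n → TT, (inner ℂ (H (w θ)) (H (w θ)) : ℂ) = (inner ℂ (H z) (H z) : ℂ) := by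
    intro θ
    have h1 := hinv (fun j => tval (θ j)) z hzmem
    have h2 : H (WithLp.toLp 2 (fun j => Complex.exp (Complex.I * ((fun j => tval (θ j)) j : ℝ)) * z j :
        Fin n → ℂ)) = H (w θ) := rfl
    rw [h2] at h1
    rw [inner_self_eq_norm_sq_to_K, inner_self_eq_norm_sq_to_K]
    exact_mod_cast h1
  have hnorm_f : ∀ p θ, ‖f p θ‖ = ‖cf p‖ := by
    intro p θ
    simp only [hf]
    rw [norm_mul, norm_prod]
    rw [Finset.prod_congr rfl (fun j _ => norm_exp_I_int_mul (kk p j) (tval (θ j)))]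
    simp
  have hfcont : ∀ p, Continuous (f p) := by
    intro p
    show Continuous (fun θ : Fin n → TT => cf p *
      ∏ j, Complex.exp (Complex.I * ((kk p j : ℤ) : ℂ) * ((tval (θ j) : ℝ) : ℂ)))
    apply continuous_const.mul
    apply continuous_finset_prod
    intro j _
    exact Complex.continuous_exp.comp (continuous_const.mul
      (Complex.continuous_ofReal.comp (continuous_tval.comp (continuous_apply j))))
  have hInt : ∀ p, Integrable (f p) (volume : Measure (Fin n → TT)) := by
    intro p
    apply Integrable.mono' (integrable_const (μ := (volume : Measure (Fin n → TT))) ‖cf p‖) (hfcont p).aestronglyMeasurable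
    filter_upwards with θ
    rw [hnorm_f]
  have hIntNorm : Summable (fun p : (Fin n → ℕ) × (Fin n → ℕ) =>
      ∫ θ : Fin n → TT, ‖f p θ‖) := by
    have hV : ∀ p : (Fin n → ℕ) × (Fin n → ℕ), (∫ θ : Fin n → TT, ‖f p θ‖)
        = ‖cf p‖ * ((volume : Measure (Fin n → TT)) Set.univ).toReal := by
      intro p
      rw [show (fun θ : Fin n → TT => ‖f p θ‖) = fun _ => ‖cf p‖ from funext (hnorm_f p)]
      rw [integral_const, smul_eq_mul, mul_comm, measureReal_def]
    rw [show (fun p : (Fin n → ℕ) × (Fin n → ℕ) => ∫ θ : Fin n → TT, ‖f p θ‖)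
      = fun p => ‖cf p‖ * ((volume : Measure (Fin n → TT)) Set.univ).toReal from funext hV]
    apply Summable.mul_right
    have habs' := habs z hzmem
    have hprod2 := Summable.mul_of_nonneg (f := fun a : Fin n → ℕ => ‖C a‖ * ∏ j, ‖z j‖ ^ a j)
      (g := fun a : Fin n → ℕ => ‖C a‖ * ∏ j, ‖z j‖ ^ a j) habs' habs'
      (fun a => by positivity) (fun a => by positivity)
    apply Summable.of_nonneg_of_le (fun p => norm_nonneg _) _ hprod2
    intro p
    simp only [hcf]
    rw [norm_mul, norm_prod]
    have h3 : ∏ j, ‖((s j : ℝ) : ℂ) ^ (p.1 j + p.2 j)‖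
        = (∏ j, ‖z j‖ ^ p.1 j) * (∏ j, ‖z j‖ ^ p.2 j) := by
      rw [← Finset.prod_mul_distrib]
      apply Finset.prod_congr rfl
      intro j _
      rw [norm_pow, show ‖((s j : ℝ) : ℂ)‖ = ‖z j‖ from rfl, pow_add]
    rw [h3]
    calc ((∏ j, ‖z j‖ ^ p.1 j) * (∏ j, ‖z j‖ ^ p.2 j)) * ‖(inner ℂ (C p.1) (C p.2) : ℂ)‖
        ≤ ((∏ j, ‖z j‖ ^ p.1 j) * (∏ j, ‖z j‖ ^ p.2 j)) * (‖C p.1‖ * ‖C p.2‖) := by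
          gcongr
          exact norm_inner_le_norm _ _
      _ = (‖C p.1‖ * ∏ j, ‖z j‖ ^ p.1 j) * (‖C p.2‖ * ∏ j, ‖z j‖ ^ p.2 j) := by ring
  have hswap := MeasureTheory.integral_tsum_of_summable_integral_norm hInt hIntNorm
  have hRHS : (∫ θ : Fin n → TT, ∑' p : (Fin n → ℕ) × (Fin n → ℕ), f p θ) = 0 := by
    rw [show (fun θ : Fin n → TT => ∑' p : (Fin n → ℕ) × (Fin n → ℕ), f p θ)
      = fun θ => (∏ j, Complex.exp (Complex.I * (((α j : ℤ) - (β j : ℤ) : ℤ) : ℂ)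
        * ((tval (θ j) : ℝ) : ℂ))) * (inner ℂ (H z) (H z) : ℂ)
      from funext (fun θ => by rw [(hpt θ).tsum_eq, hconst θ])]
    rw [MeasureTheory.integral_mul_const]
    erw [MeasureTheory.integral_fintype_prod_eq_prod (ι := Fin n)
      (f := fun j t => Complex.exp (Complex.I * (((α j : ℤ) - (β j : ℤ) : ℤ) : ℂ)
        * ((tval t : ℝ) : ℂ)))]
    rw [Finset.prod_congr rfl (fun j _ => integral_TT_exp ((α j : ℤ) - (β j : ℤ)))]
    rw [show (∏ j, if ((α j : ℤ) - (β j : ℤ)) = 0 then ((2 * Real.pi : ℝ) : ℂ) else 0) = 0 from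
      Finset.prod_eq_zero (Finset.mem_univ j0)
        (if_neg (sub_ne_zero_of_ne (fun hc => hj0 (by exact_mod_cast hc))))]
    rw [zero_mul]
  have hLHS : ∀ p : (Fin n → ℕ) × (Fin n → ℕ), (∫ θ : Fin n → TT, f p θ)
      = cf p * ∏ j, (if kk p j = 0 then ((2 * Real.pi : ℝ) : ℂ) else 0) := by
    intro p
    rw [show (fun θ : Fin n → TT => f p θ) = fun θ : Fin n → TT => cf p *
      ∏ j, Complex.exp (Complex.I * ((kk p j : ℤ) : ℂ) * ((tval (θ j) : ℝ) : ℂ)) from rfl]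
    rw [MeasureTheory.integral_const_mul]
    erw [MeasureTheory.integral_fintype_prod_eq_prod (ι := Fin n)
      (f := fun j t => Complex.exp (Complex.I * ((kk p j : ℤ) : ℂ) * ((tval t : ℝ) : ℂ)))]
    rw [Finset.prod_congr rfl (fun j _ => integral_TT_exp (kk p j))]
  have heq0 : ∑' p : (Fin n → ℕ) × (Fin n → ℕ),
      cf p * ∏ j, (if kk p j = 0 then ((2 * Real.pi : ℝ) : ℂ) else 0) = 0 := by
    rw [tsum_congr (fun p => (hLHS p).symm), hswap, hRHS]
  set S : Set ((Fin n → ℕ) × (Fin n → ℕ)) := {p | ∀ j, p.1 j + β j = p.2 j + α j} with hS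
  have hkk0 : ∀ p : (Fin n → ℕ) × (Fin n → ℕ), ∀ j,
      (kk p j = 0 ↔ p.1 j + β j = p.2 j + α j) := by
    intro p j
    simp only [hkk]
    omega
  have hsupp : Function.support (fun p : (Fin n → ℕ) × (Fin n → ℕ) =>
      cf p * ∏ j, (if kk p j = 0 then ((2 * Real.pi : ℝ) : ℂ) else 0)) ⊆ S := by
    intro p hp
    simp only [hS, Set.mem_setOf_eq]
    intro j
    by_contra hj
    apply hp
    have hne : kk p j ≠ 0 := fun h => hj ((hkk0 p j).1 h)
    show cf p * ∏ j', (if kk p j' = 0 then ((2 * Real.pi : ℝ) : ℂ) else 0) = 0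
    rw [show (∏ j', if kk p j' = 0 then ((2 * Real.pi : ℝ) : ℂ) else 0) = 0 from
      Finset.prod_eq_zero (Finset.mem_univ j) (if_neg hne), mul_zero]
  have h5 : ∑' q : ↥S, (cf q.1 * ∏ j, (if kk q.1 j = 0 then ((2 * Real.pi : ℝ) : ℂ) else 0))
      = 0 := by
    rw [tsum_subtype_eq_of_support_subset hsupp]
    exact heq0
  have h6 : ∀ q : ↥S, (∏ j, (if kk q.1 j = 0 then ((2 * Real.pi : ℝ) : ℂ) else 0))
      = ((2 * Real.pi : ℝ) : ℂ) ^ n := by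
    intro q
    rw [Finset.prod_congr rfl (fun j _ => if_pos ((hkk0 q.1 j).2 (q.2 j)))]
    rw [Finset.prod_const, Finset.card_univ, Fintype.card_fin]
  have h7 : (∑' q : ↥S, cf q.1) * ((2 * Real.pi : ℝ) : ℂ) ^ n = 0 := by
    rw [← tsum_mul_right, ← h5]
    exact tsum_congr (fun q => by rw [h6 q])
  have hpi : ((2 * Real.pi : ℝ) : ℂ) ^ n ≠ 0 :=
    pow_ne_zero _ (Complex.ofReal_ne_zero.mpr (by positivity))
  have h8 : ∑' q : ↥S, cf q.1 = 0 := by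
    rcases mul_eq_zero.mp h7 with h | h
    · exact h
    · exact absurd h hpi
  have h9 : ∑' q : {p : (Fin n → ℕ) × (Fin n → ℕ) // ∀ j, p.1 j + β j = p.2 j + α j},
      cf q.1 = 0 := h8
  calc ∑' q : {p : (Fin n → ℕ) × (Fin n → ℕ) // ∀ j, p.1 j + β j = p.2 j + α j},
      (inner ℂ (C q.1.1) (C q.1.2) : ℂ) * ∏ j, ((s j : ℝ) : ℂ) ^ (q.1.1 j + q.1.2 j)
      = ∑' q : {p : (Fin n → ℕ) × (Fin n → ℕ) // ∀ j, p.1 j + β j = p.2 j + α j}, cf q.1 :=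
        tsum_congr (fun q => by simp only [hcf]; ring)
    _ = 0 := h9


end Stmt13Aux

/-- if `H(z) = Σ_α C_α z^α` is a convergent power series on a ball about `0`
and `‖H(γ z)‖² = ‖H(z)‖²` for every diagonal unitary `γ`, then the coefficient vectors are
pairwise orthogonal. -/
theorem stmt13 {n N : ℕ} (r : ℝ) (hr : 0 < r)
    (H : EuclideanSpace ℂ (Fin n) → EuclideanSpace ℂ (Fin N))
    (C : (Fin n → ℕ) → EuclideanSpace ℂ (Fin N))
    (habs : ∀ z ∈ ball (0 : EuclideanSpace ℂ (Fin n)) r,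
      Summable (fun α : Fin n → ℕ => ‖C α‖ * ∏ j, ‖z j‖ ^ α j))
    (hser : ∀ z ∈ ball (0 : EuclideanSpace ℂ (Fin n)) r,
      HasSum (fun α : Fin n → ℕ => (∏ j, z j ^ α j) • C α) (H z))
    (hinv : ∀ θ : Fin n → ℝ, ∀ z ∈ ball (0 : EuclideanSpace ℂ (Fin n)) r,
      ‖H (WithLp.toLp 2 (fun j => Complex.exp (Complex.I * θ j) * z j : Fin n → ℂ))‖ ^ 2 = ‖H z‖ ^ 2) :
    ∀ α β : Fin n → ℕ, α ≠ β → (inner ℂ (C α) (C β) : ℂ) = 0 := by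
  intro α β hαβ
  classical
  obtain ⟨j0, hj0⟩ : ∃ j, α j ≠ β j := by
    by_contra hc
    push_neg at hc
    exact hαβ (funext hc)
  set ρ : ℝ := r / (n + 1) with hρdef
  have hρ : 0 < ρ := by positivity
  have hball : ∀ v : EuclideanSpace ℂ (Fin n), (∀ j, ‖v j‖ ≤ ρ) →
      v ∈ ball (0 : EuclideanSpace ℂ (Fin n)) r := by
    intro v hv
    rw [mem_ball_zero_iff, EuclideanSpace.norm_eq]
    rw [Real.sqrt_lt' hr]
    calc ∑ j, ‖v j‖ ^ 2 ≤ ∑ _j : Fin n, ρ ^ 2 := Finset.sum_le_sum (fun j _ => by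
          have h1 := hv j
          have h2 := norm_nonneg (v j)
          nlinarith)
      _ = n * ρ ^ 2 := by rw [Finset.sum_const, Finset.card_univ, Fintype.card_fin, nsmul_eq_mul]
      _ < r ^ 2 := by
          rw [hρdef, div_pow]
          rw [show (n : ℝ) * (r ^ 2 / ((n : ℝ) + 1) ^ 2) = (n : ℝ) * r ^ 2 / ((n : ℝ) + 1) ^ 2
            by ring]
          rw [div_lt_iff₀ (by positivity)]
          nlinarith [mul_pos hr hr, mul_nonneg (mul_pos hr hr).le (sq_nonneg (n : ℝ)),
            mul_nonneg (mul_pos hr hr).le (Nat.cast_nonneg (α := ℝ) n)]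
  have hstep1 : ∀ s : Fin n → ℝ, (∀ j, s j ∈ Set.Ioo 0 ρ) →
      ∑' q : {p : (Fin n → ℕ) × (Fin n → ℕ) // ∀ j, p.1 j + β j = p.2 j + α j},
        (inner ℂ (C q.1.1) (C q.1.2) : ℂ) * ∏ j, ((s j : ℝ) : ℂ) ^ (q.1.1 j + q.1.2 j) = 0 :=
    fun s hs => Stmt13Aux.step1 r ρ hρ H C habs hser hinv hball α β j0 hj0 s hs
  -- summability at the uniform radius ρ
  have hρmem : (WithLp.toLp 2 (fun _ => ((ρ : ℝ) : ℂ)) : EuclideanSpace ℂ (Fin n)) ∈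
      ball (0 : EuclideanSpace ℂ (Fin n)) r := by
    apply hball
    intro j
    show ‖((ρ : ℝ) : ℂ)‖ ≤ ρ
    rw [Complex.norm_real, Real.norm_eq_abs, abs_of_pos hρ]
  have habsρ : Summable (fun a : Fin n → ℕ => ‖C a‖ * ∏ j, ρ ^ a j) := by
    apply (habs _ hρmem).congr
    intro a
    congr 1
    apply Finset.prod_congr rfl
    intro j _
    congr 1
    show ‖((ρ : ℝ) : ℂ)‖ = ρ
    rw [Complex.norm_real, Real.norm_eq_abs, abs_of_pos hρ]
  set e : {p : (Fin n → ℕ) × (Fin n → ℕ) // ∀ j, p.1 j + β j = p.2 j + α j} → Fin n → ℕ :=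
    fun q j => q.1.1 j + q.1.2 j with he_def
  have he : Function.Injective e := by
    intro x y hxy
    have h1 : ∀ j, x.1.1 j + x.1.2 j = y.1.1 j + y.1.2 j := fun j => congrFun hxy j
    have h2 := x.2
    have h3 := y.2
    apply Subtype.ext
    have hfst : x.1.1 = y.1.1 := funext (fun j => by
      have := h1 j; have := h2 j; have := h3 j; omega)
    have hsnd : x.1.2 = y.1.2 := funext (fun j => by
      have := h1 j; have := h2 j; have := h3 j; omega)
    exact Prod.ext hfst hsnd
  have hsumS : Summable (fun q : {p : (Fin n → ℕ) × (Fin n → ℕ) //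
      ∀ j, p.1 j + β j = p.2 j + α j} =>
      ‖(inner ℂ (C q.1.1) (C q.1.2) : ℂ)‖ * ∏ j, ρ ^ e q j) := by
    have hprod2 := Summable.mul_of_nonneg (f := fun a : Fin n → ℕ => ‖C a‖ * ∏ j, ρ ^ a j)
      (g := fun a : Fin n → ℕ => ‖C a‖ * ∏ j, ρ ^ a j) habsρ habsρ
      (fun a => by positivity) (fun a => by positivity)
    have htot : Summable (fun p : (Fin n → ℕ) × (Fin n → ℕ) =>
        ‖(inner ℂ (C p.1) (C p.2) : ℂ)‖ * ∏ j, ρ ^ (p.1 j + p.2 j)) := by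
      apply Summable.of_nonneg_of_le (fun p => by positivity) _ hprod2
      intro p
      have hsplit : ∏ j, ρ ^ (p.1 j + p.2 j) = (∏ j, ρ ^ p.1 j) * (∏ j, ρ ^ p.2 j) := by
        rw [← Finset.prod_mul_distrib]
        exact Finset.prod_congr rfl (fun j _ => pow_add _ _ _)
      rw [hsplit]
      calc ‖(inner ℂ (C p.1) (C p.2) : ℂ)‖ * ((∏ j, ρ ^ p.1 j) * (∏ j, ρ ^ p.2 j))
          ≤ (‖C p.1‖ * ‖C p.2‖) * ((∏ j, ρ ^ p.1 j) * (∏ j, ρ ^ p.2 j)) := by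
            gcongr
            exact norm_inner_le_norm _ _
        _ = (‖C p.1‖ * ∏ j, ρ ^ p.1 j) * (‖C p.2‖ * ∏ j, ρ ^ p.2 j) := by ring
    exact htot.comp_injective Subtype.val_injective
  have hzeroS : ∀ s : Fin n → ℝ, (∀ j, s j ∈ Set.Ioo 0 ρ) →
      ∑' q : {p : (Fin n → ℕ) × (Fin n → ℕ) // ∀ j, p.1 j + β j = p.2 j + α j},
        (inner ℂ (C q.1.1) (C q.1.2) : ℂ) * ∏ j, ((s j : ℝ) : ℂ) ^ e q j = 0 :=
    fun s hs => hstep1 s hs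
  have hfinal := Stmt13Aux.multivar n _ inferInstance e he
    (fun q => (inner ℂ (C q.1.1) (C q.1.2) : ℂ)) ρ hρ hsumS hzeroS
    ⟨(α, β), fun j => Nat.add_comm _ _⟩
  exact hfinal
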